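/- For α > -1, c > 0, and integers 0 ≤ i < n, the function Q̃_n^{(α,c)}(x) := (d^n/dx^n)[x^{(α+n)/2} e^{-cx} I_{α+n}(2√x)] satisfies ∫_0^∞ x^i Q̃_n^{(α,c)}(x) dx = 0, while ∫_0^∞ x^n Q̃_n^{(α,c)}(x) dx = (-1)^n Γ(n+1) e^{1/c} c^{-α-n-1}. -/

import Mathlib

set_option maxHeartbeats 1000000
open Real MeasureTheory Set Filter Topology Nat


noncomputable def besselI (ν z : ℝ) : ℝ :=
  (z / 2) ^ ν * ∑' i : ℕ, (z ^ 2 / 4) ^ i / (Real.Gamma (i + 1) * Real.Gamma (ν + i + 1))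

/-- The weight `w_{v,c}(x) = x^{v/2} e^{-c x} I_v(2√x)`. -/
noncomputable def wBessel (v c x : ℝ) : ℝ :=
  x ^ (v / 2) * Real.exp (-c * x) * besselI v (2 * Real.sqrt x)
/-- `Q̃_n^{(α,c)}(x) = (d^n/dx^n) w_{α+n,c}(x)`. -/
noncomputable def Qt (n : ℕ) (α c x : ℝ) : ℝ :=
  iteratedDeriv n (fun y => wBessel (α + n) c y) x

namespace QtAux

noncomputable def TT (c : ℝ) (b : ℕ → ℝ) (q x : ℝ) : ℝ :=
  ∑' k : ℕ, b k * (x ^ (q + k) * Real.exp (-c * x))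

def Adm (b : ℕ → ℝ) : Prop :=
  ∀ (m : ℕ) (R : ℝ), 0 < R → Summable fun k => |b k| * (k + m)! * R ^ k

lemma Adm.summable_weight {b : ℕ → ℝ} (hb : Adm b) {R : ℝ} (hR : 0 < R) :
    Summable fun k => |b k| * R ^ k := by
  refine Summable.of_nonneg_of_le (fun k => by positivity) (fun k => ?_) (hb 0 R hR)
  have h1 : (1:ℝ) ≤ (k + 0)! := by exact_mod_cast Nat.one_le_iff_ne_zero.2 (Nat.factorial_ne_zero _)
  calc |b k| * R ^ k = |b k| * 1 * R ^ k := by ring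
  _ ≤ |b k| * (k+0)! * R ^ k := by gcongr

lemma Adm.const_mul {b : ℕ → ℝ} (hb : Adm b) (e : ℝ) : Adm fun k => e * b k := by
  intro m R hR
  refine Summable.of_nonneg_of_le (fun k => by positivity) (fun k => ?_) (((hb m R hR).mul_left |e|))
  rw [abs_mul]; ring_nf; exact le_rfl

lemma Adm.sub {b₁ b₂ : ℕ → ℝ} (h₁ : Adm b₁) (h₂ : Adm b₂) : Adm fun k => b₁ k - b₂ k := by
  intro m R hR
  refine Summable.of_nonneg_of_le (fun k => by positivity) (fun k => ?_)
    ((h₁ m R hR).add (h₂ m R hR))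
  calc |b₁ k - b₂ k| * (k+m)! * R ^ k ≤ (|b₁ k| + |b₂ k|) * (k+m)! * R ^ k := by
        gcongr; exact abs_sub _ _
  _ = |b₁ k| * (k+m)! * R ^ k + |b₂ k| * (k+m)! * R ^ k := by ring

lemma Adm.zero : Adm fun _ : ℕ => (0:ℝ) := by
  intro m R hR; simpa using summable_zero

lemma Adm.mul_linear {b : ℕ → ℝ} (hb : Adm b) (t : ℝ) : Adm fun k => b k * (t + k) := by
  intro m R hR
  refine Summable.of_nonneg_of_le (fun k => by positivity) (fun k => ?_)
    ((hb (m+1) R hR).mul_left (|t|+1))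
  rw [abs_mul]
  have h1 : |t + (k:ℝ)| ≤ (|t|+1) * (k+1) := by
    have := abs_add_le t (k:ℝ)
    have h2 : |(k:ℝ)| = (k:ℝ) := abs_of_nonneg (by positivity)
    nlinarith [abs_nonneg t]
  have h2 : ((k+m)! : ℝ) * (k+1) ≤ (k+(m+1))! := by
    have : (k + (m+1))! = (k+m+1) * (k+m)! := by
      rw [show k + (m+1) = (k+m)+1 by ring, Nat.factorial_succ]
    rw [this]; push_cast
    have h4 : (0:ℝ) < (k+m)! := by exact_mod_cast Nat.factorial_pos (k+m)
    have h3 : ((k:ℝ)+1) ≤ (k:ℝ)+(m:ℝ)+1 := by linarith [Nat.cast_nonneg (α := ℝ) m]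
    nlinarith
  calc |b k| * |t + (k:ℝ)| * (k+m)! * R ^ k
      ≤ |b k| * ((|t|+1) * (k+1)) * (k+m)! * R ^ k := by gcongr
  _ = (|t|+1) * (|b k| * ((k+m)! * (k+1)) * R ^ k) := by ring
  _ ≤ (|t|+1) * (|b k| * (k+(m+1))! * R ^ k) := by
        have h2' : ((k+m)! : ℝ) * (k+1) ≤ ((k+(m+1))! : ℝ) := h2
        gcongr


noncomputable def aa (v : ℝ) (k : ℕ) : ℝ := 1 / (k ! * Real.Gamma (v + k + 1))

lemma gamma_arg_pos {v : ℝ} (hv : -1 < v) (k : ℕ) : 0 < v + k + 1 := by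
  have : (0:ℝ) ≤ k := Nat.cast_nonneg k
  linarith

lemma aa_pos {v : ℝ} (hv : -1 < v) (k : ℕ) : 0 < aa v k := by
  have h1 := Real.Gamma_pos_of_pos (gamma_arg_pos hv k)
  have h2 : (0:ℝ) < k ! := by exact_mod_cast Nat.factorial_pos k
  unfold aa; positivity

lemma adm_aa {v : ℝ} (hv : -1 < v) : Adm (aa v) := by
  intro m R hR
  have key : ∀ k : ℕ, |aa v k| * (k+m)! * R ^ k = (k+m)! * R ^ k / (k ! * Real.Gamma (v + k + 1)) := by
    intro k
    rw [abs_of_pos (aa_pos hv k)]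
    unfold aa; ring
  simp only [key]
  set f : ℕ → ℝ := fun k => (k+m)! * R ^ k / (k ! * Real.Gamma (v + k + 1)) with hf
  have fpos : ∀ k, 0 < f k := by
    intro k
    have h1 := Real.Gamma_pos_of_pos (gamma_arg_pos hv k)
    have h2 : (0:ℝ) < k ! := by exact_mod_cast Nat.factorial_pos k
    have h3 : (0:ℝ) < (k+m)! := by exact_mod_cast Nat.factorial_pos (k+m)
    positivity
  refine summable_of_ratio_norm_eventually_le (r := 1/2) (by norm_num) ?_
  have hev : ∀ᶠ k : ℕ in atTop, (2*R) * ((k:ℝ)+m+1) ≤ (k+1) * (v+k+1) := by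
    have h1 : Tendsto (fun k : ℕ => (k:ℝ)) atTop atTop := tendsto_natCast_atTop_atTop
    obtain ⟨N, hN⟩ := (h1.eventually_ge_atTop (max (4*R*((m:ℝ)+2)) (-2*v))).exists_forall_of_atTop
    filter_upwards [eventually_ge_atTop (max N 1)] with k hk
    have hk1 : 1 ≤ k := le_trans (le_max_right _ _) hk
    have hkN := hN k (le_trans (le_max_left _ _) hk)
    have hA : 4*R*((m:ℝ)+2) ≤ k := le_trans (le_max_left _ _) hkN
    have hB : -2*v ≤ (k:ℝ) := le_trans (le_max_right _ _) hkN
    have hk1' : (1:ℝ) ≤ k := by exact_mod_cast hk1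
    have hm0 : (0:ℝ) ≤ m := Nat.cast_nonneg m
    have s1 : (k:ℝ) + m + 1 ≤ k * (m+2) := by nlinarith
    have s2 : 2*R*((k:ℝ)+m+1) ≤ 2*R*(k*(m+2)) := by nlinarith
    have s3 : 2*R*((k:ℝ)*(m+2)) ≤ (k:ℝ) * ((k:ℝ)/2) := by nlinarith
    have s4 : (k:ℝ)/2 ≤ v + k + 1 := by nlinarith
    nlinarith
  filter_upwards [hev] with k hk
  have hrec : f (k+1) = f k * (((k:ℝ)+m+1) * R / (((k:ℝ)+1) * (v+k+1))) := by
    have e1 : ((k+1)+m)! = ((k+m)+1)! := by ring_nf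
    have e2 : (((k+m)+1)! : ℝ) = ((k:ℝ)+m+1) * (k+m)! := by
      rw [Nat.factorial_succ]; push_cast; ring
    have e3 : ((k+1)! : ℝ) = ((k:ℝ)+1) * k ! := by rw [Nat.factorial_succ]; push_cast; ring
    have e4 : Real.Gamma (v + (k+1:ℕ) + 1) = (v+k+1) * Real.Gamma (v + k + 1) := by
      have : (v + ((k:ℕ)+1:ℕ) + 1 : ℝ) = (v + k + 1) + 1 := by push_cast; ring
      rw [this, Real.Gamma_add_one (ne_of_gt (gamma_arg_pos hv k))]
    have h1 := Real.Gamma_pos_of_pos (gamma_arg_pos hv k)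
    have h2 : (0:ℝ) < k ! := by exact_mod_cast Nat.factorial_pos k
    have hk1 : (0:ℝ) < (k:ℝ)+1 := by positivity
    have hvk : (0:ℝ) < v+k+1 := gamma_arg_pos hv k
    rw [hf]
    simp only []
    rw [e1, e4]
    rw [e2, e3]
    rw [pow_succ]
    field_simp
  rw [Real.norm_eq_abs, Real.norm_eq_abs, abs_of_pos (fpos _), abs_of_pos (fpos k), hrec]
  have hvk : (0:ℝ) < v+k+1 := gamma_arg_pos hv k
  have hk1 : (0:ℝ) < (k:ℝ)+1 := by positivity
  rw [mul_comm (1/2 : ℝ) (f k)]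
  apply mul_le_mul_of_nonneg_left _ (le_of_lt (fpos k))
  rw [div_le_iff₀ (by positivity)]
  nlinarith [hR]


lemma rpow_bound {l R x q : ℝ} (hl : 0 < l) (hx1 : l ≤ x) (hx2 : x ≤ R) (k : ℕ) :
    x ^ (q + k) ≤ max (l ^ q) (R ^ q) * R ^ k := by
  have hx0 : 0 < x := lt_of_lt_of_le hl hx1
  rw [Real.rpow_add hx0, Real.rpow_natCast]
  have h1 : x ^ q ≤ max (l ^ q) (R ^ q) := by
    rcases le_or_gt 0 q with hq | hq
    · exact le_max_of_le_right (Real.rpow_le_rpow hx0.le hx2 hq)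
    · exact le_max_of_le_left (Real.rpow_le_rpow_of_nonpos hl hx1 hq.le)
  have h2 : x ^ k ≤ R ^ k := pow_le_pow_left₀ hx0.le hx2 k
  exact mul_le_mul h1 h2 (pow_nonneg hx0.le k)
    (le_trans (Real.rpow_nonneg hl.le q) (le_max_left _ _))

lemma summable_term {c : ℝ} {b : ℕ → ℝ} (hb : Adm b) (q : ℝ) {x : ℝ} (hx : 0 < x) :
    Summable fun k : ℕ => b k * (x ^ (q + k) * Real.exp (-c * x)) := by
  apply Summable.of_norm
  refine Summable.of_nonneg_of_le (fun k => norm_nonneg _) (fun k => ?_)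
    ((hb.summable_weight hx).mul_left (x ^ q * Real.exp (-c*x)))
  rw [Real.norm_eq_abs, abs_mul, Real.rpow_add hx, Real.rpow_natCast]
  have e1 : |x ^ q * x ^ k * Real.exp (-c*x)| = x ^ q * x ^ k * Real.exp (-c*x) :=
    abs_of_nonneg (by positivity)
  refine le_of_eq ?_
  rw [e1]; ring

lemma hasDerivAt_TT {c : ℝ} (hc : 0 < c) {b : ℕ → ℝ} (hb : Adm b) (q : ℝ) {x : ℝ} (hx : 0 < x) :
    HasDerivAt (fun y => TT c b q y)
      (TT c (fun k => b k * (q + k)) (q-1) x - c * TT c b q x) x := by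
  have hl : 0 < x/2 := by linarith
  have hxt : x ∈ Ioo (x/2) (x+1) := ⟨by linarith, by linarith⟩
  set M1 : ℝ := max ((x/2) ^ (q-1)) ((x+1) ^ (q-1)) with hM1
  set M2 : ℝ := max ((x/2) ^ q) ((x+1) ^ q) with hM2
  have hM1n : 0 ≤ M1 := le_trans (Real.rpow_nonneg hl.le _) (le_max_left _ _)
  have hM2n : 0 ≤ M2 := le_trans (Real.rpow_nonneg hl.le _) (le_max_left _ _)
  set g : ℕ → ℝ → ℝ := fun k y => b k * (y ^ (q + k) * Real.exp (-c * y)) with hg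
  set g' : ℕ → ℝ → ℝ := fun k y =>
    b k * (q + k) * (y ^ ((q-1) + k) * Real.exp (-c * y))
      - c * (b k * (y ^ (q + k) * Real.exp (-c * y))) with hg'
  set u : ℕ → ℝ := fun k =>
    M1 * (|b k * (q + k)| * (x+1) ^ k) + (c * M2) * (|b k| * (x+1) ^ k) with hu
  have hx1 : (0:ℝ) < x + 1 := by linarith
  have husum : Summable u := by
    exact (( ((hb.mul_linear q).summable_weight hx1).mul_left M1).add
      (((hb.summable_weight hx1)).mul_left (c * M2)))
  have hderiv : ∀ k y, y ∈ Ioo (x/2) (x+1) → HasDerivAt (g k) (g' k y) y := by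
    intro k y hy
    have hy0 : 0 < y := lt_trans hl hy.1
    have h1 : HasDerivAt (fun z : ℝ => z ^ (q + k)) ((q+k) * y ^ (q + k - 1)) y :=
      Real.hasDerivAt_rpow_const (Or.inl hy0.ne')
    have h0 : HasDerivAt (fun z : ℝ => -c * z) (-c) y := by
      simpa using (hasDerivAt_id y).const_mul (-c)
    have h2 : HasDerivAt (fun z : ℝ => Real.exp (-c * z)) (Real.exp (-c*y) * (-c)) y := h0.exp
    have h3 := (h1.mul h2).const_mul (b k)
    have e : b k * ((q + ↑k) * y ^ (q + ↑k - 1) * Real.exp (-c * y)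
        + y ^ (q + ↑k) * (Real.exp (-c * y) * -c)) = g' k y := by
      rw [hg']
      simp only []
      rw [show (q-1) + (k:ℝ) = q + k - 1 by ring]
      ring
    rw [hg]
    simp only []
    exact e ▸ h3
  have hbound : ∀ k y, y ∈ Ioo (x/2) (x+1) → ‖g' k y‖ ≤ u k := by
    intro k y hy
    have hy0 : 0 < y := lt_trans hl hy.1
    have hexp : Real.exp (-c * y) ≤ 1 := by
      have : Real.exp (-c*y) ≤ Real.exp 0 := Real.exp_le_exp.2 (by nlinarith)
      simpa using this
    have hexp0 : 0 ≤ Real.exp (-c*y) := (Real.exp_pos _).le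
    have b1 : y ^ ((q-1) + k) ≤ M1 * (x+1) ^ k := rpow_bound hl hy.1.le hy.2.le k
    have b2 : y ^ (q + k) ≤ M2 * (x+1) ^ k := rpow_bound hl hy.1.le hy.2.le k
    have r1 : (0:ℝ) ≤ y ^ ((q-1)+k) := Real.rpow_nonneg hy0.le _
    have r2 : (0:ℝ) ≤ y ^ (q+k) := Real.rpow_nonneg hy0.le _
    rw [hg']
    simp only []
    refine le_trans (abs_sub _ _) ?_
    rw [hu]
    simp only []
    have habs1 : |b k * (q+(k:ℝ)) * (y ^ ((q-1)+(k:ℝ)) * Real.exp (-c*y))|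
        = |b k * (q+(k:ℝ))| * (y ^ ((q-1)+(k:ℝ)) * Real.exp (-c*y)) := by
      rw [abs_mul, abs_of_nonneg (mul_nonneg r1 hexp0)]
    have habs2 : |c * (b k * (y ^ (q+(k:ℝ)) * Real.exp (-c*y)))|
        = c * (|b k| * (y ^ (q+(k:ℝ)) * Real.exp (-c*y))) := by
      rw [abs_mul, abs_mul, abs_of_nonneg hc.le, abs_of_nonneg (mul_nonneg r2 hexp0)]
    rw [habs1, habs2]
    have hM1k : (0:ℝ) ≤ M1 * (x+1)^k := by positivity
    have hM2k : (0:ℝ) ≤ M2 * (x+1)^k := by positivity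
    have t1 : |b k * (q+k)| * (y ^ ((q-1)+k) * Real.exp (-c*y))
        ≤ |b k * (q+k)| * (M1 * (x+1)^k) := by
      refine mul_le_mul_of_nonneg_left ?_ (abs_nonneg _)
      calc y ^ ((q-1)+(k:ℝ)) * Real.exp (-c*y) ≤ (M1 * (x+1)^k) * 1 :=
            mul_le_mul b1 hexp hexp0 hM1k
      _ = M1 * (x+1)^k := mul_one _
    have t2 : c * (|b k| * (y ^ (q+k) * Real.exp (-c*y)))
        ≤ c * (|b k| * (M2 * (x+1)^k)) := by
      refine mul_le_mul_of_nonneg_left (mul_le_mul_of_nonneg_left ?_ (abs_nonneg _)) hc.le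
      calc y ^ (q+(k:ℝ)) * Real.exp (-c*y) ≤ (M2 * (x+1)^k) * 1 :=
            mul_le_mul b2 hexp hexp0 hM2k
      _ = M2 * (x+1)^k := mul_one _
    calc |b k * (q+k)| * (y ^ ((q-1)+k) * Real.exp (-c*y))
          + c * (|b k| * (y ^ (q+k) * Real.exp (-c*y)))
        ≤ |b k * (q+k)| * (M1 * (x+1)^k) + c * (|b k| * (M2 * (x+1)^k)) := by
          exact add_le_add t1 t2
      _ = M1 * (|b k * (q + k)| * (x+1) ^ k) + (c * M2) * (|b k| * (x+1) ^ k) := by ring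
  have hg0 : Summable fun k => g k x := summable_term hb q hx
  have key := hasDerivAt_tsum_of_isPreconnected husum isOpen_Ioo isPreconnected_Ioo
    hderiv hbound hxt hg0 hxt
  have hA : Summable fun k => b k * (q + k) * (x ^ ((q-1) + k) * Real.exp (-c * x)) :=
    summable_term (hb.mul_linear q) (q-1) hx
  have hB : Summable fun k => c * (b k * (x ^ (q + k) * Real.exp (-c * x))) :=
    (summable_term hb q hx).mul_left c
  have e : (∑' k, g' k x) = TT c (fun k => b k * (q + k)) (q-1) x - c * TT c b q x := by
    rw [hg']
    simp only []
    rw [Summable.tsum_sub hA hB, tsum_mul_left]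
    rfl
  exact e ▸ key


lemma TT_mul_pow {c q x : ℝ} {b : ℕ → ℝ} (hx : 0 < x) (j : ℕ) :
    x ^ j * TT c b q x = TT c b (q + j) x := by
  rw [TT, TT, ← tsum_mul_left]
  congr 1; funext k
  rw [show q + (j:ℝ) + (k:ℝ) = (q + k) + j by ring, Real.rpow_add hx (q+k) j,
    Real.rpow_natCast]
  ring

lemma TT_zero_val {c q : ℝ} {b : ℕ → ℝ} (hq : 0 < q) : TT c b q 0 = 0 := by
  rw [TT]
  convert tsum_zero with k
  have : q + (k:ℝ) ≠ 0 := by positivity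
  rw [Real.zero_rpow this]
  ring

lemma continuousWithinAt_TT {c q : ℝ} {b : ℕ → ℝ} (hc : 0 < c) (hb : Adm b) (hq : 0 < q) :
    ContinuousWithinAt (TT c b q) (Ici 0) 0 := by
  have hu : Summable fun k => |b k| := by
    have := hb.summable_weight one_pos
    simpa using this
  have tu : TendstoUniformlyOn
      (fun (N : ℕ) x => ∑ k ∈ Finset.range N, b k * (x ^ (q + (k:ℝ)) * Real.exp (-c*x)))
      (fun x => TT c b q x) atTop (Icc 0 1) := by
    apply tendstoUniformlyOn_tsum_nat hu
    intro k x hx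
    have hx0 : 0 ≤ x := hx.1
    have h1 : x ^ (q + (k:ℝ)) ≤ 1 := Real.rpow_le_one hx0 hx.2 (by positivity)
    have h2 : Real.exp (-c*x) ≤ 1 := by
      have : Real.exp (-c*x) ≤ Real.exp 0 := Real.exp_le_exp.2 (by nlinarith)
      simpa using this
    have h3 : (0:ℝ) ≤ x ^ (q + (k:ℝ)) := Real.rpow_nonneg hx0 _
    rw [Real.norm_eq_abs, abs_mul, abs_of_nonneg (mul_nonneg h3 (Real.exp_pos _).le)]
    calc |b k| * (x ^ (q + (k:ℝ)) * Real.exp (-c*x)) ≤ |b k| * (1 * 1) := by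
          exact mul_le_mul_of_nonneg_left (mul_le_mul h1 h2 (Real.exp_pos _).le one_pos.le)
            (abs_nonneg _)
    _ = |b k| := by ring
  have hcont : ContinuousOn (TT c b q) (Icc 0 1) := by
    apply tu.continuousOn
    refine Filter.Frequently.of_forall (fun N => ?_)
    apply (continuous_finset_sum _ fun k _ => ?_).continuousOn
    have : Continuous fun x : ℝ => x ^ (q + (k:ℝ)) := by
      rw [continuous_iff_continuousAt]
      intro x
      exact Real.continuousAt_rpow_const x _ (Or.inr (by positivity))
    exact continuous_const.mul (this.mul ((Real.continuous_exp).comp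
      (continuous_const.mul continuous_id)))
  have h0 : (0:ℝ) ∈ Icc (0:ℝ) 1 := ⟨le_rfl, one_pos.le⟩
  refine (hcont.continuousWithinAt h0).mono_of_mem_nhdsWithin ?_
  have : Icc (0:ℝ) 1 = Ici 0 ∩ Iic 1 := (Ici_inter_Iic).symm
  rw [this]
  exact inter_mem_nhdsWithin _ (Iic_mem_nhds one_pos)

lemma TT_exp_bound {c : ℝ} (hc : 0 < c) {b : ℕ → ℝ} (hb : Adm b) (q : ℝ) :
    ∃ C : ℝ, 0 ≤ C ∧ ∀ x : ℝ, 1 ≤ x → |TT c b q x| ≤ C * Real.exp (-(c/2) * x) := by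
  set B : ℕ := ⌈q⌉₊ with hB
  have hqB : q ≤ B := Nat.le_ceil q
  set D : ℝ := 2/c with hD
  have hD0 : 0 < D := by positivity
  have hsum : Summable (fun k => |b k| * (k+B)! * D^k) := hb B D hD0
  set C0 : ℝ := ∑' k, |b k| * (k+B)! * D ^ k with hC0d
  have hC0 : 0 ≤ C0 := tsum_nonneg fun k => by positivity
  refine ⟨C0 * D ^ B, by positivity, fun x hx => ?_⟩
  have hx0 : 0 < x := lt_of_lt_of_le one_pos hx
  have key : ∀ k : ℕ, |b k * (x ^ (q + (k:ℝ)) * Real.exp (-c*x))|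
      ≤ (|b k| * (k+B)! * D^k) * (D^B * Real.exp (-(c/2)*x)) := by
    intro k
    have hy : (0:ℝ) < (c/2)*x := by positivity
    have h3 : ((c/2)*x)^(k+B) / (k+B)! ≤ Real.exp ((c/2)*x) :=
      Real.pow_div_factorial_le_exp _ hy.le _
    have hp : (0:ℝ) < ((c/2)*x)^(k+B) / (k+B)! := by
      have : (0:ℝ) < (k+B)! := by exact_mod_cast Nat.factorial_pos (k+B)
      positivity
    have h4 : Real.exp (-((c/2)*x)) ≤ (k+B)! / ((c/2)*x)^(k+B) := by
      rw [Real.exp_neg]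
      calc (Real.exp ((c/2)*x))⁻¹ ≤ (((c/2)*x)^(k+B) / (k+B)!)⁻¹ :=
            inv_anti₀ hp h3
      _ = (k+B)! / ((c/2)*x)^(k+B) := by rw [inv_div]
    have e1 : Real.exp (-c*x) = Real.exp (-((c/2)*x)) * Real.exp (-((c/2)*x)) := by
      rw [← Real.exp_add]; congr 1; ring
    have hr : (0:ℝ) ≤ x ^ (q + (k:ℝ)) := Real.rpow_nonneg hx0.le _
    have step1 : x ^ (q + (k:ℝ)) * Real.exp (-c*x)
        ≤ x ^ (q + (k:ℝ)) * ((k+B)! / ((c/2)*x)^(k+B)) * Real.exp (-((c/2)*x)) := by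
      rw [e1, ← mul_assoc]
      gcongr
    have hmono : x ^ (q + (k:ℝ)) ≤ x ^ (k+B) := by
      rw [← Real.rpow_natCast x (k+B)]
      apply Real.rpow_le_rpow_of_exponent_le hx
      push_cast; linarith
    have e2 : (x:ℝ)^(k+B) * (((k+B)!:ℝ) / ((c/2)*x)^(k+B)) = ((k+B)!:ℝ) * D^(k+B) := by
      have hc2 : ((c/2):ℝ) ≠ 0 := by positivity
      have hxx : (x:ℝ) ≠ 0 := hx0.ne'
      rw [mul_pow, hD]
      field_simp
      rw [← mul_pow, show c / 2 * (2 / c) = (1:ℝ) by field_simp, one_pow]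
    have hfac : (0:ℝ) ≤ ((k+B)! : ℝ) := by positivity
    have step4 : x ^ (q + (k:ℝ)) * Real.exp (-c*x)
        ≤ (k+B)! * D^(k+B) * Real.exp (-((c/2)*x)) := by
      refine le_trans step1 ?_
      rw [← e2]
      have h6 : x ^ (q + (k:ℝ)) * (((k+B)!:ℝ) / ((c/2)*x)^(k+B))
          ≤ (x:ℝ)^(k+B) * (((k+B)!:ℝ) / ((c/2)*x)^(k+B)) := by
        have hpos : (0:ℝ) ≤ ((k+B)!:ℝ) / ((c/2)*x)^(k+B) := by positivity
        exact mul_le_mul_of_nonneg_right hmono hpos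
      exact mul_le_mul_of_nonneg_right h6 (Real.exp_pos _).le
    rw [abs_mul, abs_of_nonneg (mul_nonneg hr (Real.exp_pos _).le)]
    calc |b k| * (x ^ (q + (k:ℝ)) * Real.exp (-c*x))
        ≤ |b k| * ((k+B)! * D^(k+B) * Real.exp (-((c/2)*x))) :=
          mul_le_mul_of_nonneg_left step4 (abs_nonneg _)
    _ = (|b k| * (k+B)! * D^k) * (D^B * Real.exp (-(c/2)*x)) := by
        rw [pow_add, show -((c/2)*x) = -(c/2)*x by ring]
        ring
  have hsn : Summable fun k => |b k * (x ^ (q + (k:ℝ)) * Real.exp (-c*x))| :=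
    (summable_term hb q hx0).abs
  have h5 : |TT c b q x| ≤ ∑' k, |b k * (x ^ (q + (k:ℝ)) * Real.exp (-c*x))| := by
    rw [TT]
    have := norm_tsum_le_tsum_norm (f := fun k => b k * (x ^ (q + (k:ℝ)) * Real.exp (-c*x)))
      (by simpa only [Real.norm_eq_abs] using hsn)
    simpa only [Real.norm_eq_abs] using this
  refine le_trans h5 ?_
  calc (∑' k, |b k * (x ^ (q + (k:ℝ)) * Real.exp (-c*x))|)
      ≤ ∑' k, (|b k| * (k+B)! * D^k) * (D^B * Real.exp (-(c/2)*x)) :=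
        Summable.tsum_le_tsum key hsn (hsum.mul_right _)
  _ = C0 * (D^B * Real.exp (-(c/2)*x)) := by rw [tsum_mul_right]
  _ = (C0 * D^B) * Real.exp (-(c/2)*x) := by ring

lemma tendsto_TT_atTop {c : ℝ} (hc : 0 < c) {b : ℕ → ℝ} (hb : Adm b) (q : ℝ) :
    Tendsto (fun x => TT c b q x) atTop (𝓝 0) := by
  obtain ⟨C, hC0, hC⟩ := TT_exp_bound hc hb q
  have hexp : Tendsto (fun x : ℝ => C * Real.exp (-(c/2)*x)) atTop (𝓝 0) := by
    have h1 : Tendsto (fun x : ℝ => -(c/2)*x) atTop atBot := by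
      apply tendsto_id.const_mul_atTop_of_neg (by linarith : -(c/2) < 0)
    have := Real.tendsto_exp_atBot.comp h1
    simpa using this.const_mul C
  apply squeeze_zero_norm' _ hexp
  filter_upwards [eventually_ge_atTop (1:ℝ)] with x hx
  exact hC x hx

lemma tendsto_pow_TT {c : ℝ} (hc : 0 < c) {b : ℕ → ℝ} (hb : Adm b) (q : ℝ) (j : ℕ) :
    Tendsto (fun x => x ^ j * TT c b q x) atTop (𝓝 0) := by
  apply (tendsto_TT_atTop hc hb (q + j)).congr'
  filter_upwards [eventually_gt_atTop (0:ℝ)] with x hx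
  exact (TT_mul_pow hx j).symm


lemma continuousOn_TT {c : ℝ} (hc : 0 < c) {b : ℕ → ℝ} (hb : Adm b) (q : ℝ) :
    ContinuousOn (TT c b q) (Ioi 0) := fun x hx =>
  ((hasDerivAt_TT hc hb q hx).continuousAt).continuousWithinAt

lemma integrableOn_TT {c : ℝ} (hc : 0 < c) {b : ℕ → ℝ} (hb : Adm b) {q : ℝ} (hq : -1 < q) :
    IntegrableOn (TT c b q) (Ioi 0) := by
  have hcont := continuousOn_TT hc hb q
  rw [show Ioi (0:ℝ) = Ioc 0 1 ∪ Ioi 1 from (Ioc_union_Ioi_eq_Ioi zero_le_one).symm]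
  apply IntegrableOn.union
  · -- on Ioc 0 1
    have hsum : Summable fun k => |b k| := by simpa using hb.summable_weight one_pos
    set C0 : ℝ := ∑' k, |b k| with hC0d
    have hC0 : 0 ≤ C0 := tsum_nonneg fun k => abs_nonneg _
    have hgint : IntegrableOn (fun x : ℝ => C0 * x ^ q) (Ioc 0 1) := by
      have h1 : IntervalIntegrable (fun x : ℝ => x ^ q) volume 0 1 :=
        intervalIntegral.intervalIntegrable_rpow' hq
      have h2 : IntegrableOn (fun x : ℝ => x ^ q) (Ioc 0 1) := by
        rwa [intervalIntegrable_iff_integrableOn_Ioc_of_le zero_le_one] at h1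
      exact h2.const_mul C0
    refine Integrable.mono' hgint ?_ ?_
    · exact (hcont.mono (fun x hx => hx.1)).aestronglyMeasurable measurableSet_Ioc
    · rw [ae_restrict_iff' measurableSet_Ioc]
      filter_upwards with x hx
      have hx0 : 0 < x := hx.1
      have key : ∀ k : ℕ, |b k * (x ^ (q + (k:ℝ)) * Real.exp (-c*x))| ≤ |b k| * x ^ q := by
        intro k
        have h1 : x ^ (q + (k:ℝ)) ≤ x ^ q := by
          rw [Real.rpow_add hx0, Real.rpow_natCast]
          have hxk : x ^ k ≤ 1 := pow_le_one₀ hx0.le hx.2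
          have := Real.rpow_nonneg hx0.le q
          nlinarith
        have h2 : Real.exp (-c*x) ≤ 1 := by
          have : Real.exp (-c*x) ≤ Real.exp 0 := Real.exp_le_exp.2 (by nlinarith)
          simpa using this
        have h3 : (0:ℝ) ≤ x ^ (q + (k:ℝ)) := Real.rpow_nonneg hx0.le _
        rw [abs_mul, abs_of_nonneg (mul_nonneg h3 (Real.exp_pos _).le)]
        calc |b k| * (x ^ (q + (k:ℝ)) * Real.exp (-c*x)) ≤ |b k| * (x ^ q * 1) := by
              exact mul_le_mul_of_nonneg_left (mul_le_mul h1 h2 (Real.exp_pos _).le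
                (Real.rpow_nonneg hx0.le q)) (abs_nonneg _)
        _ = |b k| * x ^ q := by ring
      have hsn : Summable fun k => |b k * (x ^ (q + (k:ℝ)) * Real.exp (-c*x))| :=
        (summable_term hb q hx0).abs
      have h5 : ‖TT c b q x‖ ≤ ∑' k, |b k * (x ^ (q + (k:ℝ)) * Real.exp (-c*x))| := by
        rw [TT]
        have := norm_tsum_le_tsum_norm (f := fun k => b k * (x ^ (q + (k:ℝ)) * Real.exp (-c*x)))
          (by simpa only [Real.norm_eq_abs] using hsn)
        simpa only [Real.norm_eq_abs] using this
      refine le_trans h5 ?_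
      calc (∑' k, |b k * (x ^ (q + (k:ℝ)) * Real.exp (-c*x))|)
          ≤ ∑' k, |b k| * x ^ q := Summable.tsum_le_tsum key hsn (hsum.mul_right _)
      _ = C0 * x ^ q := tsum_mul_right
  · -- on Ioi 1
    obtain ⟨C, hC0', hC⟩ := TT_exp_bound hc hb q
    have hgint : IntegrableOn (fun x : ℝ => C * Real.exp (-(c/2)*x)) (Ioi 1) :=
      (exp_neg_integrableOn_Ioi 1 (by linarith : (0:ℝ) < c/2)).const_mul C
    refine Integrable.mono' hgint ?_ ?_
    · exact (hcont.mono (fun x (hx : x ∈ Ioi (1:ℝ)) => mem_Ioi.2 (lt_trans one_pos hx))).aestronglyMeasurable measurableSet_Ioi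
    · rw [ae_restrict_iff' measurableSet_Ioi]
      filter_upwards with x hx
      exact hC x (le_of_lt hx)

lemma integrableOn_pow_TT {c : ℝ} (hc : 0 < c) {b : ℕ → ℝ} (hb : Adm b) {q : ℝ} (hq : -1 < q)
    (j : ℕ) : IntegrableOn (fun x => x ^ j * TT c b q x) (Ioi 0) := by
  have h1 : IntegrableOn (TT c b (q + j)) (Ioi 0) :=
    integrableOn_TT hc hb (by have : (0:ℝ) ≤ j := Nat.cast_nonneg j; linarith)
  exact h1.congr_fun (fun x hx => (TT_mul_pow hx j).symm) measurableSet_Ioi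

lemma Gamma_growth {q : ℝ} (hq : -1 < q) (k : ℕ) :
    Real.Gamma (q + k + 1) ≤ Real.Gamma (q+1) * (k + ⌈q+1⌉₊)! := by
  set B : ℕ := ⌈q+1⌉₊ with hB
  have hqB : q + 1 ≤ B := Nat.le_ceil _
  have hG1 : 0 < Real.Gamma (q+1) := Real.Gamma_pos_of_pos (by linarith)
  induction k with
  | zero =>
    have h1 : (1:ℝ) ≤ (0 + B)! := by exact_mod_cast Nat.one_le_iff_ne_zero.2 (Nat.factorial_ne_zero _)
    have := le_mul_of_one_le_right hG1.le h1
    simpa using this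
  | succ k ih =>
    have harg : 0 < q + k + 1 := gamma_arg_pos hq k
    have e1 : (q + ((k:ℕ)+1:ℕ) + 1 : ℝ) = (q + k + 1) + 1 := by push_cast; ring
    rw [e1, Real.Gamma_add_one harg.ne']
    have hGpos := Real.Gamma_pos_of_pos harg
    have step : (q + k + 1) * Real.Gamma (q + k + 1)
        ≤ ((k:ℝ) + B + 1) * (Real.Gamma (q+1) * (k + B)!) := by
      apply mul_le_mul
      · have : (0:ℝ) ≤ (k:ℝ) := Nat.cast_nonneg k
        linarith
      · exact ih
      · exact hGpos.le
      · positivity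
    refine le_trans step (le_of_eq ?_)
    have e2 : ((k+1) + B)! = ((k+B)+1)! := by ring_nf
    rw [e2, Nat.factorial_succ]
    push_cast
    ring

lemma summable_gamma_bound {c : ℝ} (hc : 0 < c) {b : ℕ → ℝ} (hb : Adm b) {q : ℝ} (hq : -1 < q) :
    Summable fun k : ℕ => |b k| * ((1/c) ^ (q+(k:ℝ)+1) * Real.Gamma (q+(k:ℝ)+1)) := by
  set B : ℕ := ⌈q+1⌉₊ with hB
  have hic : (0:ℝ) < 1/c := one_div_pos.mpr hc
  have hG1 : 0 < Real.Gamma (q+1) := Real.Gamma_pos_of_pos (by linarith)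
  have hnn : ∀ k : ℕ, 0 ≤ |b k| * ((1/c)^(q+(k:ℝ)+1) * Real.Gamma (q+(k:ℝ)+1)) := by
    intro k
    exact mul_nonneg (abs_nonneg _) (mul_nonneg (Real.rpow_nonneg hic.le _)
      (Real.Gamma_pos_of_pos (gamma_arg_pos hq k)).le)
  refine Summable.of_nonneg_of_le hnn (fun k => ?_)
    (((hb B (1/c) hic)).mul_left ((1/c)^(q+1) * Real.Gamma (q+1)))
  have e1 : (1/c) ^ (q+(k:ℝ)+1) = (1/c)^(q+1) * (1/c)^(k:ℕ) := by
    rw [← Real.rpow_natCast (1/c) k, ← Real.rpow_add hic]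
    congr 1; ring
  rw [e1]
  have h2 := Gamma_growth hq k
  have h3 : (0:ℝ) ≤ (1/c)^(q+1) := Real.rpow_nonneg hic.le _
  have h4 : (0:ℝ) ≤ (1/c:ℝ)^(k:ℕ) := by positivity
  calc |b k| * ((1/c)^(q+1) * (1/c)^(k:ℕ) * Real.Gamma (q+(k:ℝ)+1))
      ≤ |b k| * ((1/c)^(q+1) * (1/c)^(k:ℕ) * (Real.Gamma (q+1) * (k + B)!)) := by
        exact mul_le_mul_of_nonneg_left (mul_le_mul_of_nonneg_left h2 (mul_nonneg h3 h4)) (abs_nonneg _)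
  _ = (1/c)^(q+1) * Real.Gamma (q+1) * (|b k| * (k+B)! * (1/c)^k) := by ring

lemma integral_TT {c : ℝ} (hc : 0 < c) {b : ℕ → ℝ} (hb : Adm b) {q : ℝ} (hq : -1 < q) :
    ∫ x in Ioi (0:ℝ), TT c b q x
      = ∑' k : ℕ, b k * ((1/c) ^ (q+(k:ℝ)+1) * Real.Gamma (q+(k:ℝ)+1)) := by
  have hterm : ∀ k : ℕ, ∫ x in Ioi (0:ℝ), x ^ (q+(k:ℝ)) * Real.exp (-c*x)
      = (1/c)^(q+(k:ℝ)+1) * Real.Gamma (q+(k:ℝ)+1) := by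
    intro k
    have h := Real.integral_rpow_mul_exp_neg_mul_Ioi
      (a := q+(k:ℝ)+1) (r := c) (gamma_arg_pos hq k) hc
    rw [← h]
    apply setIntegral_congr_fun measurableSet_Ioi
    intro t ht
    simp only [show q+(k:ℝ)+1-1 = q+(k:ℝ) by ring, neg_mul]
  have hint : ∀ k : ℕ, IntegrableOn (fun x : ℝ => b k * (x ^ (q+(k:ℝ)) * Real.exp (-c*x))) (Ioi 0) := by
    intro k
    have hqk : -1 < q + (k:ℝ) := by have : (0:ℝ) ≤ k := Nat.cast_nonneg k; linarith
    have base := integrableOn_rpow_mul_exp_neg_mul_rpow hqk zero_lt_one hc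
    have base' : IntegrableOn (fun x : ℝ => x ^ (q+(k:ℝ)) * Real.exp (-c*x)) (Ioi 0) := by
      refine base.congr_fun (fun x hx => ?_) measurableSet_Ioi
      simp only [Real.rpow_one]
    exact base'.const_mul _
  have swap := MeasureTheory.integral_tsum
    (μ := volume.restrict (Ioi (0:ℝ)))
    (f := fun k x => b k * (x ^ (q+(k:ℝ)) * Real.exp (-c*x)))
    (fun k => (hint k).aestronglyMeasurable) ?_
  · show (∫ x in Ioi (0:ℝ), ∑' k : ℕ, b k * (x ^ (q+(k:ℝ)) * Real.exp (-c*x))) = _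
    rw [swap]
    congr 1; funext k
    rw [MeasureTheory.integral_const_mul, hterm k]
  · -- lintegral bound
    have heq : ∀ k : ℕ, (∫⁻ x in Ioi (0:ℝ), ‖b k * (x ^ (q+(k:ℝ)) * Real.exp (-c*x))‖ₑ)
        = ENNReal.ofReal (|b k| * ((1/c)^(q+(k:ℝ)+1) * Real.Gamma (q+(k:ℝ)+1))) := by
      intro k
      rw [← MeasureTheory.ofReal_integral_norm_eq_lintegral_enorm (hint k)]
      congr 1
      have e1 : ∀ x ∈ Ioi (0:ℝ), ‖b k * (x ^ (q+(k:ℝ)) * Real.exp (-c*x))‖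
          = |b k| * (x ^ (q+(k:ℝ)) * Real.exp (-c*x)) := by
        intro x hx
        have hx0 : (0:ℝ) < x := hx
        rw [Real.norm_eq_abs, abs_mul,
          abs_of_nonneg (mul_nonneg (Real.rpow_nonneg hx0.le _) (Real.exp_pos _).le)]
      rw [setIntegral_congr_fun measurableSet_Ioi e1, MeasureTheory.integral_const_mul, hterm k]
    simp only [heq]
    have hnn : ∀ k : ℕ, 0 ≤ |b k| * ((1/c)^(q+(k:ℝ)+1) * Real.Gamma (q+(k:ℝ)+1)) := by
      intro k
      have h1 : (0:ℝ) ≤ (1/c) ^ (q+(k:ℝ)+1) := Real.rpow_nonneg (by positivity) _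
      have h2 : (0:ℝ) ≤ Real.Gamma (q+(k:ℝ)+1) := (Real.Gamma_pos_of_pos (gamma_arg_pos hq k)).le
      exact mul_nonneg (abs_nonneg _) (mul_nonneg h1 h2)
    rw [← ENNReal.ofReal_tsum_of_nonneg hnn (summable_gamma_bound hc hb hq)]
    exact ENNReal.ofReal_ne_top


lemma TT_coeff_sub {c q x : ℝ} {b₁ b₂ : ℕ → ℝ} (h₁ : Adm b₁) (h₂ : Adm b₂) (hx : 0 < x) :
    TT c (fun k => b₁ k - b₂ k) q x = TT c b₁ q x - TT c b₂ q x := by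
  rw [TT, TT, TT, ← Summable.tsum_sub (summable_term h₁ q hx) (summable_term h₂ q hx)]
  congr 1; funext k; ring

lemma TT_coeff_cmul {c q x e : ℝ} {b : ℕ → ℝ} :
    TT c (fun k => e * b k) q x = e * TT c b q x := by
  rw [TT, TT, ← tsum_mul_left]
  congr 1; funext k; ring

lemma TT_coeff_zero {c q x : ℝ} : TT c (fun _ => (0:ℝ)) q x = 0 := by
  simp [TT]

noncomputable def Bc (v c : ℝ) : ℕ → ℕ → ℕ → ℝ
  | 0 => fun j k => if j = 0 then aa v k else 0
  | m+1 => fun j k =>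
      (if j = 0 then 0 else Bc v c m (j-1) k * (v - ((j:ℝ)-1) + k)) - c * Bc v c m j k

lemma Bc_zero {v c : ℝ} : ∀ m j, m < j → ∀ k, Bc v c m j k = 0 := by
  intro m
  induction m with
  | zero =>
    intro j hj k
    simp only [Bc]
    rw [if_neg (by omega)]
  | succ m ih =>
    intro j hj k
    have hj0 : j ≠ 0 := by omega
    simp only [Bc, if_neg hj0]
    rw [ih (j-1) (by omega) k, ih j (by omega) k]
    ring

lemma adm_Bc {v c : ℝ} (hv : -1 < v) : ∀ m j, Adm (Bc v c m j) := by
  intro m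
  induction m with
  | zero =>
    intro j
    by_cases hj : j = 0
    · subst hj
      have : Bc v c 0 0 = aa v := by funext k; simp [Bc]
      rw [this]; exact adm_aa hv
    · have : Bc v c 0 j = fun _ => 0 := by funext k; simp [Bc, hj]
      rw [this]; exact Adm.zero
  | succ m ih =>
    intro j
    have h2 : Adm fun k => c * Bc v c m j k := (ih j).const_mul c
    by_cases hj : j = 0
    · subst hj
      have : Bc v c (m+1) 0 = fun k => (0:ℝ) - c * Bc v c m 0 k := by
        funext k; simp [Bc]
      rw [this]
      exact Adm.sub Adm.zero h2
    · have : Bc v c (m+1) j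
          = fun k => (Bc v c m (j-1) k * (v - ((j:ℝ)-1) + k)) - c * Bc v c m j k := by
        funext k; simp [Bc, hj]
      rw [this]
      exact Adm.sub ((ih (j-1)).mul_linear _) h2

noncomputable def FF (v c : ℝ) (m : ℕ) (x : ℝ) : ℝ :=
  ∑ j ∈ Finset.range (m+1), TT c (Bc v c m j) (v - j) x

lemma hasDerivAt_FF {v c : ℝ} (hc : 0 < c) (hv : -1 < v) (m : ℕ) {x : ℝ} (hx : 0 < x) :
    HasDerivAt (FF v c m) (FF v c (m+1) x) x := by
  have hD : HasDerivAt (fun y => ∑ j ∈ Finset.range (m+1), TT c (Bc v c m j) (v - j) y)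
      (∑ j ∈ Finset.range (m+1),
        (TT c (fun k => Bc v c m j k * ((v - j) + k)) ((v - j) - 1) x
          - c * TT c (Bc v c m j) (v - j) x)) x := by
    apply HasDerivAt.fun_sum
    intro j hj
    exact hasDerivAt_TT hc (adm_Bc hv m j) (v - j) hx
  have key : FF v c (m+1) x = ∑ j ∈ Finset.range (m+1),
      (TT c (fun k => Bc v c m j k * ((v - j) + k)) ((v - j) - 1) x
        - c * TT c (Bc v c m j) (v - j) x) := by
    have step1 : ∀ j ∈ Finset.range (m+2), TT c (Bc v c (m+1) j) (v - j) x
        = TT c (fun k => if j = 0 then 0 else Bc v c m (j-1) k * (v - ((j:ℝ)-1) + k)) (v - j) x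
          - c * TT c (Bc v c m j) (v - j) x := by
      intro j hj
      have hadm1 : Adm (fun k => if j = 0 then (0:ℝ) else Bc v c m (j-1) k * (v - ((j:ℝ)-1) + k)) := by
        by_cases hj0 : j = 0
        · simp only [hj0, if_true]; exact Adm.zero
        · simp only [hj0, if_false]; exact (adm_Bc hv m (j-1)).mul_linear _
      have hadm2 : Adm (fun k => c * Bc v c m j k) := (adm_Bc hv m j).const_mul c
      have e : Bc v c (m+1) j = fun k =>
          (if j = 0 then 0 else Bc v c m (j-1) k * (v - ((j:ℝ)-1) + k)) - c * Bc v c m j k := by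
        funext k; rfl
      rw [e, TT_coeff_sub hadm1 hadm2 hx, TT_coeff_cmul]
    have hterm : ∀ i ∈ Finset.range (m+1),
        TT c (fun k => if (i+1 : ℕ) = 0 then (0:ℝ)
          else Bc v c m ((i+1)-1) k * (v - (((i+1:ℕ):ℝ)-1) + k)) (v - ((i+1:ℕ):ℝ)) x
        = TT c (fun k => Bc v c m i k * ((v - i) + k)) ((v - i) - 1) x := by
      intro i hi
      have h1 : (fun k : ℕ => if (i+1 : ℕ) = 0 then (0:ℝ)
          else Bc v c m ((i+1)-1) k * (v - (((i+1:ℕ):ℝ)-1) + k))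
          = fun k => Bc v c m i k * ((v - i) + k) := by
        funext k
        rw [if_neg (Nat.succ_ne_zero i)]
        simp only [Nat.add_sub_cancel]
        push_cast; ring_nf
      rw [h1]
      congr 1
      push_cast; ring
    calc FF v c (m+1) x
        = ∑ j ∈ Finset.range (m+2),
            (TT c (fun k => if j = 0 then 0 else Bc v c m (j-1) k * (v - ((j:ℝ)-1) + k)) (v - j) x
              - c * TT c (Bc v c m j) (v - j) x) := by
          rw [FF]; exact Finset.sum_congr rfl step1
      _ = (∑ j ∈ Finset.range (m+2),
            TT c (fun k => if j = 0 then 0 else Bc v c m (j-1) k * (v - ((j:ℝ)-1) + k)) (v - j) x)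
          - ∑ j ∈ Finset.range (m+2), c * TT c (Bc v c m j) (v - j) x := by rw [Finset.sum_sub_distrib]
      _ = (∑ i ∈ Finset.range (m+1), TT c (fun k => Bc v c m i k * ((v - i) + k)) ((v - i) - 1) x)
          - ∑ j ∈ Finset.range (m+1), c * TT c (Bc v c m j) (v - j) x := by
          congr 1
          · rw [Finset.sum_range_succ']
            have e1 := Finset.sum_congr rfl hterm
            rw [e1]
            have e0 : TT c (fun k : ℕ => if (0:ℕ) = 0 then (0:ℝ)
                else Bc v c m (0-1) k * (v - (((0:ℕ):ℝ)-1) + k)) (v - ((0:ℕ):ℝ)) x = 0 := by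
              simp [TT]
            rw [e0, add_zero]
          · rw [Finset.sum_range_succ]
            have hz : Bc v c m (m+1) = fun _ => (0:ℝ) := funext (Bc_zero m (m+1) (by omega))
            rw [hz, TT_coeff_zero, mul_zero, add_zero]
      _ = ∑ j ∈ Finset.range (m+1),
            (TT c (fun k => Bc v c m j k * ((v - j) + k)) ((v - j) - 1) x
              - c * TT c (Bc v c m j) (v - j) x) := by rw [Finset.sum_sub_distrib]
  rw [key]
  exact hD


lemma FF_zero_val {v c : ℝ} {m : ℕ} (hm : (m:ℝ) < v) : FF v c m 0 = 0 := by
  rw [FF]; apply Finset.sum_eq_zero; intro j hj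
  have hj' : (j:ℝ) ≤ m := by exact_mod_cast Nat.lt_succ_iff.1 (Finset.mem_range.1 hj)
  exact TT_zero_val (by linarith)

lemma continuousWithinAt_FF {v c : ℝ} (hc : 0 < c) (hv : -1 < v) {m : ℕ} (hm : (m:ℝ) < v) :
    ContinuousWithinAt (FF v c m) (Ici 0) 0 := by
  have h : Tendsto (fun x => ∑ j ∈ Finset.range (m+1), TT c (Bc v c m j) (v - j) x)
      (𝓝[Ici 0] 0) (𝓝 (∑ j ∈ Finset.range (m+1), TT c (Bc v c m j) (v - j) 0)) := by
    apply tendsto_finset_sum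
    intro j hj
    have hj' : (j:ℝ) ≤ m := by exact_mod_cast Nat.lt_succ_iff.1 (Finset.mem_range.1 hj)
    exact continuousWithinAt_TT hc (adm_Bc hv m j) (by linarith)
  exact h

lemma tendsto_pow_FF {v c : ℝ} (hc : 0 < c) (hv : -1 < v) (m : ℕ) (j : ℕ) :
    Tendsto (fun x => x ^ j * FF v c m x) atTop (𝓝 0) := by
  have h : Tendsto (fun x => ∑ i ∈ Finset.range (m+1), x ^ j * TT c (Bc v c m i) (v - i) x)
      atTop (𝓝 (∑ i ∈ Finset.range (m+1), (0:ℝ))) :=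
    tendsto_finset_sum _ (fun i _ => tendsto_pow_TT hc (adm_Bc hv m i) (v - i) j)
  simp only [Finset.sum_const_zero] at h
  apply h.congr
  intro x
  rw [FF, Finset.mul_sum]

lemma tendsto_FF {v c : ℝ} (hc : 0 < c) (hv : -1 < v) (m : ℕ) :
    Tendsto (FF v c m) atTop (𝓝 0) := by
  have := tendsto_pow_FF hc hv m 0
  simpa using this

lemma integrableOn_pow_FF {v c : ℝ} (hc : 0 < c) (hv : -1 < v) {m : ℕ} (hm : (m:ℝ) < v + 1)
    (j : ℕ) : IntegrableOn (fun x => x ^ j * FF v c m x) (Ioi 0) := by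
  have h : IntegrableOn (fun x => ∑ i ∈ Finset.range (m+1),
      x ^ j * TT c (Bc v c m i) (v - i) x) (Ioi 0) := by
    apply MeasureTheory.integrable_finset_sum
    intro i hi
    have hi' : (i:ℝ) ≤ m := by exact_mod_cast Nat.lt_succ_iff.1 (Finset.mem_range.1 hi)
    exact integrableOn_pow_TT hc (adm_Bc hv m i) (by linarith) j
  exact h.congr_fun (fun x hx => by rw [FF, Finset.mul_sum]) measurableSet_Ioi

lemma integrableOn_FF {v c : ℝ} (hc : 0 < c) (hv : -1 < v) {m : ℕ} (hm : (m:ℝ) < v + 1) :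
    IntegrableOn (FF v c m) (Ioi 0) := by
  have := integrableOn_pow_FF hc hv hm 0
  exact this.congr_fun (fun x hx => by simp) measurableSet_Ioi

lemma FF_integral_zero {v c : ℝ} (hc : 0 < c) (hv : -1 < v) {m : ℕ}
    (hm : ((m:ℝ)+1) < v + 1) :
    ∫ x in Ioi (0:ℝ), FF v c (m+1) x = 0 := by
  have hm' : (m:ℝ) < v := by linarith
  have h := MeasureTheory.integral_Ioi_of_hasDerivAt_of_tendsto
    (continuousWithinAt_FF hc hv hm')
    (fun x hx => hasDerivAt_FF hc hv m hx)
    (integrableOn_FF hc hv (by push_cast; linarith))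
    (tendsto_FF hc hv m)
  rw [h, FF_zero_val hm', sub_zero]

lemma FF_ibp {v c : ℝ} (hc : 0 < c) (hv : -1 < v) {i m : ℕ}
    (hm : ((m:ℝ)+1) < v + 1) :
    ∫ x in Ioi (0:ℝ), x ^ (i+1) * FF v c (m+1) x
      = -((i:ℝ)+1) * ∫ x in Ioi (0:ℝ), x ^ i * FF v c m x := by
  have hm' : (m:ℝ) < v := by linarith
  have hm1 : (m:ℝ) < v + 1 := by linarith
  have hm2 : ((m+1:ℕ):ℝ) < v + 1 := by push_cast; linarith
  have hderiv : ∀ x ∈ Ioi (0:ℝ), HasDerivAt (fun x => x^(i+1) * FF v c m x)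
      (((i:ℝ)+1) * x^i * FF v c m x + x^(i+1) * FF v c (m+1) x) x := by
    intro x hx
    have h1 : HasDerivAt (fun x : ℝ => x^(i+1)) (((i:ℝ)+1) * x^i) x := by
      have := hasDerivAt_pow (i+1) x
      simpa using this
    have := h1.fun_mul (hasDerivAt_FF hc hv m hx)
    convert this using 1 <;> ring
  have hcont : ContinuousWithinAt (fun x : ℝ => x^(i+1) * FF v c m x) (Ici 0) 0 :=
    ((continuous_pow (i+1)).continuousWithinAt).mul (continuousWithinAt_FF hc hv hm')
  have hA : IntegrableOn (fun x : ℝ => ((i:ℝ)+1) * x^i * FF v c m x) (Ioi 0) := by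
    have h0 : IntegrableOn (fun x : ℝ => ((i:ℝ)+1) * (x^i * FF v c m x)) (Ioi 0) :=
      (integrableOn_pow_FF hc hv hm1 i).const_mul ((i:ℝ)+1)
    exact h0.congr_fun (fun x hx => by ring) measurableSet_Ioi
  have hB : IntegrableOn (fun x : ℝ => x^(i+1) * FF v c (m+1) x) (Ioi 0) :=
    integrableOn_pow_FF hc hv hm2 (i+1)
  have hint1 : IntegrableOn (fun x : ℝ =>
      ((i:ℝ)+1) * x^i * FF v c m x + x^(i+1) * FF v c (m+1) x) (Ioi 0) := hA.add hB
  have htend : Tendsto (fun x : ℝ => x^(i+1) * FF v c m x) atTop (𝓝 0) :=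
    tendsto_pow_FF hc hv m (i+1)
  have h := MeasureTheory.integral_Ioi_of_hasDerivAt_of_tendsto hcont hderiv hint1 htend
  have hf0 : (0:ℝ)^(i+1) * FF v c m 0 = 0 := by rw [FF_zero_val hm']; ring
  rw [hf0, sub_zero] at h
  rw [MeasureTheory.integral_add hA hB] at h
  have hmul : ∫ x in Ioi (0:ℝ), ((i:ℝ)+1) * x^i * FF v c m x
      = ((i:ℝ)+1) * ∫ x in Ioi (0:ℝ), x^i * FF v c m x := by
    rw [← MeasureTheory.integral_const_mul]
    apply setIntegral_congr_fun measurableSet_Ioi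
    intro x hx
    ring
  rw [hmul] at h
  linarith [h]

lemma FF_moment {v c : ℝ} (hc : 0 < c) (hv : -1 < v) :
    ∀ (i m : ℕ), i ≤ m → ((m:ℝ) < v + 1) →
    ∫ x in Ioi (0:ℝ), x ^ i * FF v c m x
      = (-1)^i * (i)! * ∫ x in Ioi (0:ℝ), FF v c (m - i) x := by
  intro i
  induction i with
  | zero =>
    intro m _ _
    simp
  | succ i ih =>
    intro m him hm
    obtain ⟨m', rfl⟩ : ∃ m', m = m'+1 := ⟨m-1, by omega⟩
    have hm2 : ((m':ℝ)+1) < v + 1 := by push_cast at hm; linarith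
    have h1 := FF_ibp hc hv (i := i) (m := m') hm2
    rw [h1]
    have h2 := ih m' (by omega) (by push_cast at hm ⊢; linarith)
    rw [h2]
    have e : (m'+1) - (i+1) = m' - i := by omega
    rw [e, Nat.factorial_succ]
    push_cast
    ring


lemma FF_zero_eq_TT {v c : ℝ} (x : ℝ) : FF v c 0 x = TT c (aa v) v x := by
  have e : Bc v c 0 0 = aa v := by funext k; simp [Bc]
  simp only [FF, zero_add, Finset.sum_range_one, Nat.cast_zero, sub_zero, e]

lemma wBessel_eq_FF {v c : ℝ} (hv : -1 < v) {x : ℝ} (hx : 0 < x) :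
    wBessel v c x = FF v c 0 x := by
  rw [FF_zero_eq_TT, wBessel, besselI, TT]
  have h1 : (2 * Real.sqrt x / 2) = Real.sqrt x := by ring
  have h2 : ((2 * Real.sqrt x)^2/4) = x := by
    rw [mul_pow, Real.sq_sqrt hx.le]; ring
  rw [h1, h2]
  have h3 : (Real.sqrt x) ^ v = x ^ (v/2) := by
    rw [Real.sqrt_eq_rpow, ← Real.rpow_mul hx.le]
    congr 1; ring
  have h4 : x^(v/2) * x^(v/2) = x^v := by
    rw [← Real.rpow_add hx]; congr 1; ring
  rw [h3]
  rw [show x ^ (v/2) * Real.exp (-c*x)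
      * (x ^ (v/2) * (∑' i:ℕ, x^i / (Real.Gamma ((i:ℝ)+1) * Real.Gamma (v+i+1))))
      = (x^v * Real.exp (-c*x)) * ∑' i:ℕ, x^i/(Real.Gamma ((i:ℝ)+1)*Real.Gamma (v+i+1)) from by
    rw [← h4]; ring]
  rw [← tsum_mul_left]
  congr 1; funext k
  rw [aa, Real.Gamma_nat_eq_factorial,
    show x ^ (v + (k:ℝ)) = x^v * x^(k:ℕ) from by rw [Real.rpow_add hx, Real.rpow_natCast]]
  have hG : Real.Gamma (v + k + 1) ≠ 0 := (Real.Gamma_pos_of_pos (gamma_arg_pos hv k)).ne'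
  have hk : ((k:ℕ)! : ℝ) ≠ 0 := by exact_mod_cast (Nat.factorial_pos k).ne'
  field_simp

lemma iter_wBessel {v c : ℝ} (hc : 0 < c) (hv : -1 < v) :
    ∀ (m : ℕ) {x : ℝ}, 0 < x → iteratedDeriv m (fun y => wBessel v c y) x = FF v c m x := by
  intro m
  induction m with
  | zero =>
    intro x hx
    rw [iteratedDeriv_zero]
    exact wBessel_eq_FF hv hx
  | succ m ih =>
    intro x hx
    rw [iteratedDeriv_succ]
    have hev : (iteratedDeriv m (fun y => wBessel v c y)) =ᶠ[𝓝 x] FF v c m := by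
      filter_upwards [IsOpen.mem_nhds isOpen_Ioi hx] with y hy
      exact ih hy
    rw [hev.deriv_eq]
    exact (hasDerivAt_FF hc hv m hx).deriv

end QtAux

open QtAux in
theorem Qt_orthogonality_and_norm (n : ℕ) (α c : ℝ) (hα : -1 < α) (hc : 0 < c) :
    (∀ i : ℕ, i < n → ∫ x in Set.Ioi (0 : ℝ), (x : ℝ) ^ (i : ℕ) * Qt n α c x = 0) ∧
      ∫ x in Set.Ioi (0 : ℝ), x ^ (n : ℕ) * Qt n α c x =
        (-1) ^ n * Real.Gamma ((n : ℝ) + 1) * Real.exp (1 / c) * c ^ (-α - n - 1) := by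
  have hn0 : (0:ℝ) ≤ n := Nat.cast_nonneg n
  have hv : -1 < α + (n:ℝ) := by linarith
  set v : ℝ := α + n with hvdef
  have hQt : ∀ x ∈ Ioi (0:ℝ), Qt n α c x = FF v c n x := by
    intro x hx
    rw [Qt]
    exact iter_wBessel hc hv n hx
  have hmain : ∀ i : ℕ, i ≤ n → (∫ x in Ioi (0:ℝ), x ^ (i:ℕ) * Qt n α c x)
      = (-1)^i * (i)! * ∫ x in Ioi (0:ℝ), FF v c (n - i) x := by
    intro i hi
    have e : (∫ x in Ioi (0:ℝ), x ^ (i:ℕ) * Qt n α c x)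
        = ∫ x in Ioi (0:ℝ), x ^ (i:ℕ) * FF v c n x :=
      setIntegral_congr_fun measurableSet_Ioi (fun x hx => by rw [hQt x hx])
    rw [e]
    exact FF_moment hc hv i n hi (by push_cast; linarith)
  constructor
  · intro i hi
    rw [hmain i (le_of_lt hi)]
    obtain ⟨m', hm'⟩ : ∃ m', n - i = m'+1 := ⟨n - i - 1, by omega⟩
    rw [hm', FF_integral_zero hc hv ?_]
    · ring
    · have h1 : (m'+1 : ℕ) ≤ n := by omega
      have h2 : ((m'+1:ℕ):ℝ) ≤ n := by exact_mod_cast h1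
      push_cast at h2 ⊢
      linarith
  · rw [hmain n le_rfl]
    simp only [Nat.sub_self]
    have hFF0 : FF v c 0 = TT c (aa v) v := funext FF_zero_eq_TT
    rw [hFF0, integral_TT hc (adm_aa hv) hv]
    have hterm : ∀ k : ℕ, aa v k * ((1/c)^(v+(k:ℝ)+1) * Real.Gamma (v+(k:ℝ)+1))
        = (1/c)^(v+1) * ((1/c)^(k:ℕ) / (k:ℕ)!) := by
      intro k
      rw [aa]
      have hG : Real.Gamma (v + k + 1) ≠ 0 := (Real.Gamma_pos_of_pos (gamma_arg_pos hv k)).ne'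
      have hk : ((k:ℕ)! : ℝ) ≠ 0 := by exact_mod_cast (Nat.factorial_pos k).ne'
      have e1 : (1/c) ^ (v+(k:ℝ)+1) = (1/c)^(v+1) * (1/c)^(k:ℕ) := by
        rw [← Real.rpow_natCast (1/c) k, ← Real.rpow_add (one_div_pos.mpr hc)]
        congr 1; ring
      rw [e1]
      field_simp
    rw [tsum_congr hterm, tsum_mul_left]
    have hexp : (∑' k : ℕ, ((1:ℝ)/c)^(k:ℕ) / (k:ℕ)!) = Real.exp (1/c) := by
      rw [Real.exp_eq_exp_ℝ, NormedSpace.exp_eq_tsum_div]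
    rw [hexp, Real.Gamma_nat_eq_factorial]
    have hc' : ((1:ℝ)/c)^(v+1) = c^(-α-(n:ℝ)-1) := by
      rw [show (-α-(n:ℝ)-1 : ℝ) = -(v+1) from by rw [hvdef]; ring,
        Real.rpow_neg hc.le, one_div, Real.inv_rpow hc.le]
    rw [hc']
    ring
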